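/- Let A, B, θ ∈ ℝ with A ≠ 0, set u(x,y) = A·(cos θ·x + sin θ·y) + B, and let U ⊆ ℝ² be an open set on which cos(u(x,y)) ≠ 0. Define f : U → ℝ by f(x,y) = log(1 + tan(u(x,y))²). Then f satisfies the two equations f_x·f_{xx} + f_y·f_{xy} − f_{xxx} − f_{xyy} = 0 and f_x·f_{yx} + f_y·f_{yy} − f_{yxx} − f_{yyy} = 0 on U. -/

import Mathlib

noncomputable def dx (f : ℝ → ℝ → ℝ) : ℝ → ℝ → ℝ := fun x y => deriv (fun t => f t y) x
noncomputable def dy (f : ℝ → ℝ → ℝ) : ℝ → ℝ → ℝ := fun x y => deriv (fun t => f x t) y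

/-- `E₁ f = f_x f_xx + f_y f_xy - f_xxx - f_xyy` (this is `D₁(λ,f)` for `λ` constant). -/
noncomputable def E1 (f : ℝ → ℝ → ℝ) : ℝ → ℝ → ℝ := fun x y =>
  dx f x y * dx (dx f) x y + dy f x y * dy (dx f) x y
    - dx (dx (dx f)) x y - dy (dy (dx f)) x y

/-- `E₂ f = f_x f_yx + f_y f_yy - f_yxx - f_yyy` (this is `D₂(λ,f)` for `λ` constant). -/
noncomputable def E2 (f : ℝ → ℝ → ℝ) : ℝ → ℝ → ℝ := fun x y =>
  dx f x y * dx (dy f) x y + dy f x y * dy (dy f) x y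
    - dx (dx (dy f)) x y - dy (dy (dy f)) x y

section Aux

variable (A B c s : ℝ)

lemma aux_affine_x (x y : ℝ) :
    HasDerivAt (fun t => A * (c * t + s * y) + B) (A * c) x := by
  have h := ((((hasDerivAt_id x).const_mul c).add_const (s * y)).const_mul A).add_const B
  exact h.congr_deriv (by ring)

lemma aux_affine_y (x y : ℝ) :
    HasDerivAt (fun t => A * (c * x + s * t) + B) (A * s) y := by
  have h := ((((hasDerivAt_id y).const_mul s).const_add (c * x)).const_mul A).add_const B
  exact h.congr_deriv (by ring)

lemma aux_tan_x {x y : ℝ} (h : Real.cos (A * (c * x + s * y) + B) ≠ 0) :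
    HasDerivAt (fun t => Real.tan (A * (c * t + s * y) + B))
      (A * c * (1 + Real.tan (A * (c * x + s * y) + B) ^ 2)) x := by
  have h1 := (Real.hasDerivAt_tan h).comp x (aux_affine_x A B c s x y)
  exact h1.congr_deriv (by rw [one_div, ← Real.inv_one_add_tan_sq h, inv_inv]; ring)

lemma aux_tan_y {x y : ℝ} (h : Real.cos (A * (c * x + s * y) + B) ≠ 0) :
    HasDerivAt (fun t => Real.tan (A * (c * x + s * t) + B))
      (A * s * (1 + Real.tan (A * (c * x + s * y) + B) ^ 2)) y := by
  have h1 := (Real.hasDerivAt_tan h).comp y (aux_affine_y A B c s x y)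
  exact h1.congr_deriv (by rw [one_div, ← Real.inv_one_add_tan_sq h, inv_inv]; ring)

lemma aux_one_add_sq_ne {w : ℝ} : (1 : ℝ) + Real.tan w ^ 2 ≠ 0 := by positivity

/-- first derivative of `f` in `x` -/
lemma aux_dx_f {x y : ℝ} (h : Real.cos (A * (c * x + s * y) + B) ≠ 0) :
    dx (fun x y => Real.log (1 + Real.tan (A * (c * x + s * y) + B) ^ 2)) x y
      = 2 * A * c * Real.tan (A * (c * x + s * y) + B) := by
  set w := A * (c * x + s * y) + B with hw
  have h1 : HasDerivAt (fun t => 1 + Real.tan (A * (c * t + s * y) + B) ^ 2)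
      (2 * Real.tan w ^ 1 * (A * c * (1 + Real.tan w ^ 2))) x := by
    have := ((aux_tan_x A B c s h).pow 2).const_add 1
    simpa using this
  have h2 := h1.log (aux_one_add_sq_ne)
  have h3 := h2.deriv
  simp only [dx]
  rw [h3]
  field_simp
  ring

lemma aux_dy_f {x y : ℝ} (h : Real.cos (A * (c * x + s * y) + B) ≠ 0) :
    dy (fun x y => Real.log (1 + Real.tan (A * (c * x + s * y) + B) ^ 2)) x y
      = 2 * A * s * Real.tan (A * (c * x + s * y) + B) := by
  set w := A * (c * x + s * y) + B with hw
  have h1 : HasDerivAt (fun t => 1 + Real.tan (A * (c * x + s * t) + B) ^ 2)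
      (2 * Real.tan w ^ 1 * (A * s * (1 + Real.tan w ^ 2))) y := by
    have := ((aux_tan_y A B c s h).pow 2).const_add 1
    simpa using this
  have h2 := h1.log (aux_one_add_sq_ne)
  have h3 := h2.deriv
  simp only [dy]
  rw [h3]
  field_simp
  ring

/-- `x`-derivative of `k · tan u` -/
lemma aux_dx_tan (k : ℝ) {x y : ℝ} (h : Real.cos (A * (c * x + s * y) + B) ≠ 0) :
    dx (fun x y => k * Real.tan (A * (c * x + s * y) + B)) x y
      = k * (A * c) * (1 + Real.tan (A * (c * x + s * y) + B) ^ 2) := by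
  have h1 := ((aux_tan_x A B c s h).const_mul k).deriv
  simp only [dx]
  rw [h1]; ring

lemma aux_dy_tan (k : ℝ) {x y : ℝ} (h : Real.cos (A * (c * x + s * y) + B) ≠ 0) :
    dy (fun x y => k * Real.tan (A * (c * x + s * y) + B)) x y
      = k * (A * s) * (1 + Real.tan (A * (c * x + s * y) + B) ^ 2) := by
  have h1 := ((aux_tan_y A B c s h).const_mul k).deriv
  simp only [dy]
  rw [h1]; ring

/-- `x`-derivative of `k · (1 + tan u ^ 2)` -/
lemma aux_dx_sq (k : ℝ) {x y : ℝ} (h : Real.cos (A * (c * x + s * y) + B) ≠ 0) :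
    dx (fun x y => k * (1 + Real.tan (A * (c * x + s * y) + B) ^ 2)) x y
      = k * (2 * A * c) * Real.tan (A * (c * x + s * y) + B)
          * (1 + Real.tan (A * (c * x + s * y) + B) ^ 2) := by
  set w := A * (c * x + s * y) + B with hw
  have h1 : HasDerivAt (fun t => k * (1 + Real.tan (A * (c * t + s * y) + B) ^ 2))
      (k * (2 * Real.tan w ^ 1 * (A * c * (1 + Real.tan w ^ 2)))) x := by
    have := (((aux_tan_x A B c s h).pow 2).const_add 1).const_mul k
    simpa using this
  simp only [dx]
  rw [h1.deriv]; ring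

lemma aux_dy_sq (k : ℝ) {x y : ℝ} (h : Real.cos (A * (c * x + s * y) + B) ≠ 0) :
    dy (fun x y => k * (1 + Real.tan (A * (c * x + s * y) + B) ^ 2)) x y
      = k * (2 * A * s) * Real.tan (A * (c * x + s * y) + B)
          * (1 + Real.tan (A * (c * x + s * y) + B) ^ 2) := by
  set w := A * (c * x + s * y) + B with hw
  have h1 : HasDerivAt (fun t => k * (1 + Real.tan (A * (c * x + s * t) + B) ^ 2))
      (k * (2 * Real.tan w ^ 1 * (A * s * (1 + Real.tan w ^ 2)))) y := by
    have := (((aux_tan_y A B c s h).pow 2).const_add 1).const_mul k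
    simpa using this
  simp only [dy]
  rw [h1.deriv]; ring

end Aux

lemma dx_congr {F G : ℝ → ℝ → ℝ} {V : Set (ℝ × ℝ)} (hV : IsOpen V)
    (h : ∀ q ∈ V, F q.1 q.2 = G q.1 q.2) {p : ℝ × ℝ} (hp : p ∈ V) :
    dx F p.1 p.2 = dx G p.1 p.2 := by
  apply Filter.EventuallyEq.deriv_eq
  have hc : ContinuousAt (fun t : ℝ => (t, p.2)) p.1 := by fun_prop
  have hmem : ∀ᶠ t in nhds p.1, (t, p.2) ∈ V := hc.eventually_mem (hV.mem_nhds (by simpa using hp))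
  filter_upwards [hmem] with t ht using h (t, p.2) ht

lemma dy_congr {F G : ℝ → ℝ → ℝ} {V : Set (ℝ × ℝ)} (hV : IsOpen V)
    (h : ∀ q ∈ V, F q.1 q.2 = G q.1 q.2) {p : ℝ × ℝ} (hp : p ∈ V) :
    dy F p.1 p.2 = dy G p.1 p.2 := by
  apply Filter.EventuallyEq.deriv_eq
  have hc : ContinuousAt (fun t : ℝ => (p.1, t)) p.2 := by fun_prop
  have hmem : ∀ᶠ t in nhds p.2, (p.1, t) ∈ V := hc.eventually_mem (hV.mem_nhds (by simpa using hp))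
  filter_upwards [hmem] with t ht using h (p.1, t) ht

theorem stmt4 (A B θ : ℝ) (hA : A ≠ 0) (U : Set (ℝ × ℝ)) (hU : IsOpen U)
    (hcos : ∀ p ∈ U, Real.cos (A * (Real.cos θ * p.1 + Real.sin θ * p.2) + B) ≠ 0) :
    ∀ p ∈ U,
      E1 (fun x y => Real.log (1 + Real.tan (A * (Real.cos θ * x + Real.sin θ * y) + B)^2)) p.1 p.2 = 0 ∧
      E2 (fun x y => Real.log (1 + Real.tan (A * (Real.cos θ * x + Real.sin θ * y) + B)^2)) p.1 p.2 = 0 := by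
  set c := Real.cos θ
  set s := Real.sin θ
  set V : Set (ℝ × ℝ) := {q | Real.cos (A * (c * q.1 + s * q.2) + B) ≠ 0} with hVdef
  have hVopen : IsOpen V := by
    have hcont : Continuous fun q : ℝ × ℝ => Real.cos (A * (c * q.1 + s * q.2) + B) := by fun_prop
    exact isOpen_compl_singleton.preimage hcont
  set f : ℝ → ℝ → ℝ := fun x y => Real.log (1 + Real.tan (A * (c * x + s * y) + B) ^ 2) with hf
  set T : ℝ × ℝ → ℝ := fun q => Real.tan (A * (c * q.1 + s * q.2) + B) with hT
  -- the first derivatives on V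
  have h1x : ∀ q ∈ V, dx f q.1 q.2 = (fun x y => 2 * A * c * Real.tan (A * (c * x + s * y) + B)) q.1 q.2 :=
    fun q hq => aux_dx_f A B c s hq
  have h1y : ∀ q ∈ V, dy f q.1 q.2 = (fun x y => 2 * A * s * Real.tan (A * (c * x + s * y) + B)) q.1 q.2 :=
    fun q hq => aux_dy_f A B c s hq
  -- second derivatives on V
  have h2xx : ∀ q ∈ V, dx (dx f) q.1 q.2
      = (fun x y => (2 * A * c * (A * c)) * (1 + Real.tan (A * (c * x + s * y) + B) ^ 2)) q.1 q.2 := by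
    intro q hq
    rw [dx_congr (G := fun x y => 2 * A * c * Real.tan (A * (c * x + s * y) + B)) hVopen h1x hq, aux_dx_tan A B c s (2 * A * c) hq]
  have h2yx : ∀ q ∈ V, dy (dx f) q.1 q.2
      = (fun x y => (2 * A * c * (A * s)) * (1 + Real.tan (A * (c * x + s * y) + B) ^ 2)) q.1 q.2 := by
    rintro q hq
    rw [dy_congr (G := fun x y => 2 * A * c * Real.tan (A * (c * x + s * y) + B)) hVopen h1x hq, aux_dy_tan A B c s (2 * A * c) hq]
  have h2xy : ∀ q ∈ V, dx (dy f) q.1 q.2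
      = (fun x y => (2 * A * s * (A * c)) * (1 + Real.tan (A * (c * x + s * y) + B) ^ 2)) q.1 q.2 := by
    intro q hq
    rw [dx_congr (G := fun x y => 2 * A * s * Real.tan (A * (c * x + s * y) + B)) hVopen h1y hq, aux_dx_tan A B c s (2 * A * s) hq]
  have h2yy : ∀ q ∈ V, dy (dy f) q.1 q.2
      = (fun x y => (2 * A * s * (A * s)) * (1 + Real.tan (A * (c * x + s * y) + B) ^ 2)) q.1 q.2 := by
    intro q hq
    rw [dy_congr (G := fun x y => 2 * A * s * Real.tan (A * (c * x + s * y) + B)) hVopen h1y hq, aux_dy_tan A B c s (2 * A * s) hq]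
  intro p hp
  have hpV : p ∈ V := hcos p hp
  -- third derivatives at p
  have h3xxx : dx (dx (dx f)) p.1 p.2
      = (2 * A * c * (A * c)) * (2 * A * c) * T p * (1 + T p ^ 2) := by
    rw [dx_congr (G := fun x y => (2 * A * c * (A * c)) * (1 + Real.tan (A * (c * x + s * y) + B) ^ 2)) hVopen h2xx hpV, aux_dx_sq A B c s _ hpV]
  have h3yyx : dy (dy (dx f)) p.1 p.2
      = (2 * A * c * (A * s)) * (2 * A * s) * T p * (1 + T p ^ 2) := by
    rw [dy_congr (G := fun x y => (2 * A * c * (A * s)) * (1 + Real.tan (A * (c * x + s * y) + B) ^ 2)) hVopen h2yx hpV, aux_dy_sq A B c s _ hpV]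
  have h3xxy : dx (dx (dy f)) p.1 p.2
      = (2 * A * s * (A * c)) * (2 * A * c) * T p * (1 + T p ^ 2) := by
    rw [dx_congr (G := fun x y => (2 * A * s * (A * c)) * (1 + Real.tan (A * (c * x + s * y) + B) ^ 2)) hVopen h2xy hpV, aux_dx_sq A B c s _ hpV]
  have h3yyy : dy (dy (dy f)) p.1 p.2
      = (2 * A * s * (A * s)) * (2 * A * s) * T p * (1 + T p ^ 2) := by
    rw [dy_congr (G := fun x y => (2 * A * s * (A * s)) * (1 + Real.tan (A * (c * x + s * y) + B) ^ 2)) hVopen h2yy hpV, aux_dy_sq A B c s _ hpV]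
  constructor
  · show E1 f p.1 p.2 = 0
    unfold E1
    rw [h1x p hpV, h1y p hpV, h2xx p hpV, h2yx p hpV, h3xxx, h3yyx]
    show 2 * A * c * T p * _ + 2 * A * s * T p * _ - _ - _ = 0
    ring
  · show E2 f p.1 p.2 = 0
    unfold E2
    rw [h1x p hpV, h1y p hpV, h2xy p hpV, h2yy p hpV, h3xxy, h3yyy]
    show 2 * A * c * T p * _ + 2 * A * s * T p * _ - _ - _ = 0
    ring
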